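/- For N₋, N₊ ≥ 2 integers, the pair (a*, x*) with a* = (1/2)·artanh((N₋ - N₊)/(N₊N₋ - 1)) and x* = √((N₋-1)/(N₋+1))·√((N₊-1)/(N₊+1)) solves the system: (1-N₋)e^{-a} + x(1+N₋)e^{a} = 0 and (1-N₊)e^{a} + x(1+N₊)e^{-a} = 0. -/

import Mathlib

open Real

/-- Inverse hyperbolic tangent. -/
noncomputable def artanh (y : ℝ) : ℝ := 1 / 2 * Real.log ((1 + y) / (1 - y))

/-- The pair `(a*, x*)` solves the leading-order matching system for an internal edge
connecting vertices of degrees `N₋ + 1` and `N₊ + 1`. -/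
theorem stmt_12 (Nm Np : ℕ) (hNm : 2 ≤ Nm) (hNp : 2 ≤ Np)
    (a x : ℝ)
    (ha : a = 1 / 2 * _root_.artanh (((Nm : ℝ) - (Np : ℝ)) / ((Np : ℝ) * (Nm : ℝ) - 1)))
    (hx : x = Real.sqrt (((Nm : ℝ) - 1) / ((Nm : ℝ) + 1)) *
      Real.sqrt (((Np : ℝ) - 1) / ((Np : ℝ) + 1))) :
    (1 - (Nm : ℝ)) * Real.exp (-a) + x * (1 + (Nm : ℝ)) * Real.exp a = 0 ∧
    (1 - (Np : ℝ)) * Real.exp a + x * (1 + (Np : ℝ)) * Real.exp (-a) = 0 := by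
  have hm : (2:ℝ) ≤ (Nm:ℝ) := by exact_mod_cast hNm
  have hp : (2:ℝ) ≤ (Np:ℝ) := by exact_mod_cast hNp
  set m := (Nm:ℝ) with hmdef
  set p := (Np:ℝ) with hpdef
  clear_value m p
  clear hmdef hpdef hNm hNp
  have hm1 : (0:ℝ) < m - 1 := by linarith
  have hm1' : (0:ℝ) < m + 1 := by linarith
  have hp1 : (0:ℝ) < p - 1 := by linarith
  have hp1' : (0:ℝ) < p + 1 := by linarith
  have hd : (0:ℝ) < p * m - 1 := by nlinarith
  have htpos : (0:ℝ) < (m - 1) * (p + 1) / ((m + 1) * (p - 1)) := by positivity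
  have hy1 : 1 + (m - p) / (p * m - 1) = (m - 1) * (p + 1) / (p * m - 1) := by
    rw [eq_div_iff hd.ne', add_mul, div_mul_cancel₀ _ hd.ne']; ring
  have hy2 : 1 - (m - p) / (p * m - 1) = (m + 1) * (p - 1) / (p * m - 1) := by
    rw [eq_div_iff hd.ne', sub_mul, div_mul_cancel₀ _ hd.ne']; ring
  have hfrac : (1 + (m - p) / (p * m - 1)) / (1 - (m - p) / (p * m - 1))
      = (m - 1) * (p + 1) / ((m + 1) * (p - 1)) := by
    rw [hy1, hy2]
    rw [div_div_div_cancel_right₀ hd.ne']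
  have ha' : a = 1 / 4 * Real.log ((m - 1) * (p + 1) / ((m + 1) * (p - 1))) := by
    rw [ha, _root_.artanh, hfrac]; ring
  have ha4 : Real.exp a ^ 4 = (m - 1) * (p + 1) / ((m + 1) * (p - 1)) := by
    have h4 : (4:ℝ) * a = Real.log ((m - 1) * (p + 1) / ((m + 1) * (p - 1))) := by
      rw [ha']; ring
    have : Real.exp a ^ 4 = Real.exp (a + a + a + a) := by
      rw [Real.exp_add, Real.exp_add, Real.exp_add]; ring
    rw [this, show a + a + a + a = (4:ℝ) * a by ring, h4, Real.exp_log htpos]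
  set u := Real.sqrt ((m - 1) / (m + 1)) with hu
  set v := Real.sqrt ((p - 1) / (p + 1)) with hv
  have hu2 : u ^ 2 = (m - 1) / (m + 1) := Real.sq_sqrt (by positivity)
  have hv2 : v ^ 2 = (p - 1) / (p + 1) := Real.sq_sqrt (by positivity)
  have hupos : 0 < u := Real.sqrt_pos.mpr (by positivity)
  have hvpos : 0 < v := Real.sqrt_pos.mpr (by positivity)
  have hvne : v ≠ 0 := hvpos.ne'
  have hmne : (m:ℝ) + 1 ≠ 0 := hm1'.ne'
  have hpne : (p:ℝ) + 1 ≠ 0 := hp1'.ne'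
  have key : Real.exp a * Real.exp a = u / v := by
    have h1 : (Real.exp a * Real.exp a) ^ 2 = (u / v) ^ 2 := by
      rw [div_pow, hu2, hv2, show (Real.exp a * Real.exp a) ^ 2 = Real.exp a ^ 4 by ring,
        ha4, div_div_div_eq]
    have h2 : 0 < Real.exp a * Real.exp a := by positivity
    have h3 : 0 < u / v := by positivity
    nlinarith [h1, h2, h3]
  have he : Real.exp a ≠ 0 := (Real.exp_pos a).ne'
  have hee : Real.exp (-a) * Real.exp a = 1 := by
    rw [← Real.exp_add]; simp
  constructor
  · have H : ((1 - m) * Real.exp (-a) + u * v * (1 + m) * Real.exp a) * Real.exp a = 0 := by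
      have expand : ((1 - m) * Real.exp (-a) + u * v * (1 + m) * Real.exp a) * Real.exp a
          = (1 - m) * (Real.exp (-a) * Real.exp a)
            + u * v * (1 + m) * (Real.exp a * Real.exp a) := by ring
      rw [expand, hee, key]
      have huv : u * v * (1 + m) * (u / v) = u ^ 2 * (1 + m) := by
        field_simp
      rw [huv, hu2]
      field_simp
      ring
    rw [hx]
    rcases mul_eq_zero.mp H with h | h
    · exact h
    · exact absurd h he
  · have H : ((1 - p) * Real.exp a + u * v * (1 + p) * Real.exp (-a)) * Real.exp a = 0 := by
      have expand : ((1 - p) * Real.exp a + u * v * (1 + p) * Real.exp (-a)) * Real.exp a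
          = (1 - p) * (Real.exp a * Real.exp a)
            + u * v * (1 + p) * (Real.exp (-a) * Real.exp a) := by ring
      rw [expand, hee, key]
      have huv : (1 - p) * (u / v) = u * (1 - p) / v := by ring
      rw [huv]
      have step : u * (1 - p) / v + u * v * (1 + p) * 1
          = u / v * ((1 - p) + v ^ 2 * (1 + p)) := by
        field_simp
      rw [step, hv2]
      have : (1 - p) + (p - 1) / (p + 1) * (1 + p) = 0 := by
        field_simp
        ring
      rw [this, mul_zero]
    rw [hx]
    rcases mul_eq_zero.mp H with h | h
    · exact h
    · exact absurd h he
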